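/- Let η ∈ (0, 1/50), let X_1, …, X_m be independent Bernoulli random variables each equal to 1 with probability η, let α_1, …, α_m ∈ {0, 1}, and set Y = ∑_{i=1}^m α_i X_i. Then for every real number d ≥ ∑_{i=1}^m α_i, one has Pr[Y ≥ d/2] ≤ (3η)^{d/5}. -/

import Mathlib

open MeasureTheory

lemma choose_le_two_pow_aux (n k : ℕ) : n.choose k ≤ 2 ^ n := by
  rcases le_or_gt k n with h | h
  · calc n.choose k ≤ ∑ i ∈ Finset.range (n + 1), n.choose i :=
        Finset.single_le_sum (f := fun i => n.choose i) (fun _ _ => Nat.zero_le _)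
          (Finset.mem_range.mpr (Nat.lt_succ_of_le h))
    _ = 2 ^ n := Nat.sum_range_choose n
  · rw [Nat.choose_eq_zero_of_lt h]; positivity

/-- Let `η ∈ (0, 1/50)`, let `X 1, …, X m` be independent Bernoulli random
variables with parameter `η` (each equals `1` with probability `η` and `0` with
probability `1 - η`), let `α i ∈ {0, 1}`, and set `Y = ∑ i, α i * X i`. Then for every
real `d ≥ ∑ i, α i`, one has `Pr[Y ≥ d/2] ≤ (3η)^(d/5)`. -/
theorem stmt_1 {Ω : Type*} [MeasurableSpace Ω] (μ : Measure Ω) [IsProbabilityMeasure μ]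
    (m : ℕ) (η : ℝ) (hη : η ∈ Set.Ioo (0 : ℝ) (1 / 50))
    (X : Fin m → Ω → ℝ) (hXmeas : ∀ i, Measurable (X i))
    (hindep : ProbabilityTheory.iIndepFun X μ)
    (hX1 : ∀ i, μ {ω | X i ω = 1} = ENNReal.ofReal η)
    (hX0 : ∀ i, μ {ω | X i ω = 0} = ENNReal.ofReal (1 - η))
    (α : Fin m → ℝ) (hα : ∀ i, α i = 0 ∨ α i = 1)
    (d : ℝ) (hd : ∑ i, α i ≤ d) :
    μ {ω | d / 2 ≤ ∑ i, α i * X i ω} ≤ ENNReal.ofReal ((3 * η) ^ (d / 5)) := by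
  obtain ⟨hη0, hη50⟩ := hη
  have hη1 : η < 1 := by linarith
  set S : Finset (Fin m) := Finset.univ.filter (fun i => α i = 1) with hSdef
  set n := S.card with hndef
  set k := ⌈d / 2⌉₊ with hkdef
  have hd0 : (0:ℝ) ≤ d := le_trans (Finset.sum_nonneg fun i _ => by
    rcases hα i with h | h <;> simp [h]) hd
  -- sum of α equals n
  have hsum : (∑ i, α i) = (n : ℝ) := by
    have h1 : ∑ i, α i = ∑ i ∈ S, α i := by
      refine (Finset.sum_subset (Finset.subset_univ S) ?_).symm
      intro i _ hiS
      rcases hα i with h | h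
      · exact h
      · exact absurd (Finset.mem_filter.mpr ⟨Finset.mem_univ i, h⟩) hiS
    rw [h1]
    rw [Finset.sum_congr rfl (fun i hi => (Finset.mem_filter.mp hi).2)]
    simp [hndef, hSdef]
  have hn_le : (n : ℝ) ≤ d := hsum ▸ hd
  -- null set where some X i is not 0/1
  have hNulli : ∀ i, μ ({ω | X i ω = 0} ∪ {ω | X i ω = 1})ᶜ = 0 := by
    intro i
    have hA : MeasurableSet {ω | X i ω = 0} := hXmeas i (measurableSet_singleton 0)
    have hB : MeasurableSet {ω | X i ω = 1} := hXmeas i (measurableSet_singleton 1)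
    have hdisj : Disjoint {ω | X i ω = 0} {ω | X i ω = 1} := by
      rw [Set.disjoint_left]
      intro ω h0 h1
      simp only [Set.mem_setOf_eq] at h0 h1
      rw [h0] at h1; norm_num at h1
    have hU : μ ({ω | X i ω = 0} ∪ {ω | X i ω = 1}) = 1 := by
      rw [measure_union hdisj hB, hX0 i, hX1 i,
        ← ENNReal.ofReal_add (by linarith) (le_of_lt hη0)]
      norm_num
    rw [measure_compl (hA.union hB) (measure_ne_top μ _), hU, measure_univ, tsub_self]
  set N : Set Ω := ⋃ i, ({ω | X i ω = 0} ∪ {ω | X i ω = 1})ᶜ with hNdef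
  have hNmu : μ N = 0 := measure_iUnion_null hNulli
  -- inclusion into union over subsets of size k
  set E : Set Ω := {ω | d / 2 ≤ ∑ i, α i * X i ω} with hEdef
  have hincl : E \ N ⊆ ⋃ T ∈ Finset.powersetCard k S, ⋂ i ∈ T, {ω | X i ω = 1} := by
    intro ω hω
    obtain ⟨hωE, hωN⟩ := hω
    have h01 : ∀ i, X i ω = 0 ∨ X i ω = 1 := by
      intro i
      by_contra h
      push_neg at h
      exact hωN (Set.mem_iUnion.mpr ⟨i, by simp [h.1, h.2]⟩)
    set T₀ : Finset (Fin m) := S.filter (fun i => X i ω = 1) with hT₀def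
    have hsum2 : ∑ i, α i * X i ω = (T₀.card : ℝ) := by
      have h1 : ∑ i, α i * X i ω = ∑ i ∈ T₀, α i * X i ω := by
        refine (Finset.sum_subset (Finset.subset_univ T₀) ?_).symm
        intro i _ hiT
        rcases hα i with h | h
        · rw [h, zero_mul]
        rcases h01 i with h' | h'
        · rw [h', mul_zero]
        · exact absurd (Finset.mem_filter.mpr
            ⟨Finset.mem_filter.mpr ⟨Finset.mem_univ i, h⟩, h'⟩) hiT
      rw [h1]
      rw [Finset.sum_congr rfl (fun i hi => by
        have hi' := Finset.mem_filter.mp hi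
        have hα1 := (Finset.mem_filter.mp hi'.1).2
        rw [hα1, hi'.2, one_mul])]
      simp
    have hcard : k ≤ T₀.card := by
      rw [hkdef, Nat.ceil_le]
      rw [hEdef] at hωE
      simp only [Set.mem_setOf_eq] at hωE
      rw [hsum2] at hωE
      exact hωE
    obtain ⟨T, hTsub, hTcard⟩ := Finset.exists_subset_card_eq hcard
    refine Set.mem_biUnion (Finset.mem_powersetCard.mpr
      ⟨hTsub.trans (Finset.filter_subset _ _), hTcard⟩) ?_
    refine Set.mem_biInter ?_
    intro i hi
    exact (Finset.mem_filter.mp (hTsub hi)).2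
  -- measure bound via union bound
  have hmeas_int : ∀ T ∈ Finset.powersetCard k S,
      μ (⋂ i ∈ T, {ω | X i ω = 1}) = ENNReal.ofReal η ^ k := by
    intro T hT
    have hTcard : T.card = k := (Finset.mem_powersetCard.mp hT).2
    show μ (⋂ i ∈ T, X i ⁻¹' {1}) = _
    rw [hindep.meas_biInter (fun i _ => ⟨{1}, measurableSet_singleton 1, rfl⟩)]
    have hX1' : ∀ i : Fin m, μ (X i ⁻¹' {1}) = ENNReal.ofReal η := fun i => hX1 i
    rw [Finset.prod_congr rfl (fun i _ => hX1' i), Finset.prod_const, hTcard]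
  have hbound : μ E ≤ (n.choose k : ENNReal) * ENNReal.ofReal η ^ k := by
    have hsplit : E ⊆ (E \ N) ∪ N := by
      intro ω hω
      by_cases h : ω ∈ N
      · exact Or.inr h
      · exact Or.inl ⟨hω, h⟩
    calc μ E ≤ μ (E \ N) + μ N := le_trans (measure_mono hsplit) (measure_union_le _ _)
    _ = μ (E \ N) := by rw [hNmu, add_zero]
    _ ≤ μ (⋃ T ∈ Finset.powersetCard k S, ⋂ i ∈ T, {ω | X i ω = 1}) := measure_mono hincl
    _ ≤ ∑ T ∈ Finset.powersetCard k S, μ (⋂ i ∈ T, {ω | X i ω = 1}) :=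
          measure_biUnion_finset_le _ _
    _ = (Finset.powersetCard k S).card • (ENNReal.ofReal η ^ k) := by
          rw [Finset.sum_congr rfl hmeas_int, Finset.sum_const]
    _ = (n.choose k : ENNReal) * ENNReal.ofReal η ^ k := by
          rw [Finset.card_powersetCard, nsmul_eq_mul]
  -- numeric bound
  refine hbound.trans ?_
  have hηk : (0:ℝ) ≤ η ^ k := by positivity
  rw [← ENNReal.ofReal_pow (le_of_lt hη0), ← ENNReal.ofReal_natCast,
    ← ENNReal.ofReal_mul (by positivity)]
  refine ENNReal.ofReal_le_ofReal ?_
  -- real inequality: choose n k * η^k ≤ (3η)^(d/5)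
  have h1 : (n.choose k : ℝ) ≤ (2:ℝ) ^ d := by
    calc (n.choose k : ℝ) ≤ ((2^n : ℕ) : ℝ) := by exact_mod_cast choose_le_two_pow_aux n k
    _ = (2:ℝ) ^ (n:ℝ) := by rw [Real.rpow_natCast]; push_cast; ring
    _ ≤ (2:ℝ) ^ d := Real.rpow_le_rpow_of_exponent_le one_le_two hn_le
  have h2 : η ^ k ≤ η ^ (d / 2) := by
    rw [← Real.rpow_natCast η k]
    exact Real.rpow_le_rpow_of_exponent_ge hη0 (le_of_lt hη1) (Nat.le_ceil _)
  have key : (2:ℝ) ^ d * η ^ (d / 2) ≤ (3 * η) ^ (d / 5) := by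
    have hsplit : η ^ (d / 2) = η ^ (d / 5) * η ^ (3 * d / 10) := by
      rw [← Real.rpow_add hη0]; ring_nf
    have hrhs : (3 * η) ^ (d / 5) = 3 ^ (d / 5) * η ^ (d / 5) :=
      Real.mul_rpow (by norm_num) (le_of_lt hη0)
    rw [hsplit, hrhs]
    have hfac : (2:ℝ) ^ d * η ^ (3 * d / 10) ≤ 3 ^ (d / 5) := by
      have h2d : (2:ℝ) ^ d = ((2:ℝ) ^ ((10:ℝ)/3)) ^ (3 * d / 10) := by
        rw [← Real.rpow_mul (by norm_num : (0:ℝ) ≤ 2)]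
        congr 1
        ring
      have hbase : (2:ℝ) ^ ((10:ℝ)/3) * η ≤ 1 := by
        have h16 : (2:ℝ) ^ ((10:ℝ)/3) ≤ 16 := by
          have h := Real.rpow_le_rpow_of_exponent_le (x := 2) one_le_two
            (by norm_num : (10:ℝ)/3 ≤ 4)
          have h4 : (2:ℝ) ^ (4:ℝ) = 16 := by
            rw [show ((4:ℝ) = ((4:ℕ):ℝ)) by norm_num, Real.rpow_natCast]; norm_num
          linarith
        have hpos : (0:ℝ) < (2:ℝ) ^ ((10:ℝ)/3) := Real.rpow_pos_of_pos (by norm_num) _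
        nlinarith
      calc (2:ℝ) ^ d * η ^ (3 * d / 10)
          = ((2:ℝ) ^ ((10:ℝ)/3) * η) ^ (3 * d / 10) := by
            rw [h2d, ← Real.mul_rpow (by positivity) (le_of_lt hη0)]
        _ ≤ 1 := Real.rpow_le_one (by positivity) hbase (by positivity)
        _ ≤ 3 ^ (d / 5) := by
            calc (1:ℝ) = 3 ^ (0:ℝ) := (Real.rpow_zero 3).symm
              _ ≤ 3 ^ (d / 5) := Real.rpow_le_rpow_of_exponent_le (by norm_num)
                  (by positivity)
    calc (2:ℝ) ^ d * (η ^ (d / 5) * η ^ (3 * d / 10))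
        = ((2:ℝ) ^ d * η ^ (3 * d / 10)) * η ^ (d / 5) := by ring
      _ ≤ 3 ^ (d / 5) * η ^ (d / 5) := by
          exact mul_le_mul_of_nonneg_right hfac (Real.rpow_nonneg (le_of_lt hη0) _)
  calc (n.choose k : ℝ) * η ^ k ≤ (2:ℝ) ^ d * η ^ (d / 2) :=
        mul_le_mul h1 h2 hηk (Real.rpow_nonneg (by norm_num) _)
    _ ≤ (3 * η) ^ (d / 5) := key
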